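/- The function g(w) = (1/2)·21^{1/4}·w^{−3/4} satisfies the ordinary differential equation g''(w) = w·g(w)⁵ for all w > 0. -/

import Mathlib

/-- `g(w) = (1/2)·21^{1/4}·w^{−3/4}` solves `g'' = w·g⁵` for `w > 0`. -/
theorem domain_wall_explicit_solution :
    let g : ℝ → ℝ := fun w => (1 / 2) * (21 : ℝ) ^ ((1 : ℝ) / 4) * w ^ (-(3 : ℝ) / 4)
    ∀ w : ℝ, 0 < w → deriv (deriv g) w = w * g w ^ 5 := by
  intro g w hw
  set c : ℝ := (1 / 2) * (21 : ℝ) ^ ((1 : ℝ) / 4) with hc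
  have hd1 : ∀ x : ℝ, x ≠ 0 → HasDerivAt g (c * (-(3:ℝ)/4) * x ^ (-(3:ℝ)/4 - 1)) x := by
    intro x hx
    have h : HasDerivAt (fun y : ℝ => c * y ^ (-(3:ℝ)/4)) _ x := (Real.hasDerivAt_rpow_const (p := -(3:ℝ)/4) (Or.inl hx)).const_mul c
    convert h using 1
    ring
  have hev : deriv g =ᶠ[nhds w] fun x => c * (-(3:ℝ)/4) * x ^ (-(3:ℝ)/4 - 1) := by
    filter_upwards [eventually_gt_nhds hw] with x hx
    exact (hd1 x (ne_of_gt hx)).deriv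
  rw [Filter.EventuallyEq.deriv_eq hev]
  have hd2 : HasDerivAt (fun x : ℝ => c * (-(3:ℝ)/4) * x ^ (-(3:ℝ)/4 - 1))
      (c * (-(3:ℝ)/4) * ((-(3:ℝ)/4 - 1) * w ^ (-(3:ℝ)/4 - 1 - 1))) w :=
    (Real.hasDerivAt_rpow_const (Or.inl (ne_of_gt hw))).const_mul _
  rw [hd2.deriv]
  have h21 : (0:ℝ) ≤ 21 := by norm_num
  have e1 : ((21:ℝ) ^ ((1:ℝ)/4))^(5:ℕ) = 21 * (21:ℝ)^((1:ℝ)/4) := by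
    rw [← Real.rpow_natCast ((21:ℝ) ^ ((1:ℝ)/4)) 5, ← Real.rpow_mul h21,
      show ((1:ℝ)/4)*((5:ℕ):ℝ) = 1 + 1/4 by push_cast; ring,
      Real.rpow_add (by norm_num), Real.rpow_one]
  have e2 : (w ^ (-(3:ℝ)/4))^(5:ℕ) = w ^ (-(15:ℝ)/4) := by
    rw [← Real.rpow_natCast (w ^ (-(3:ℝ)/4)) 5, ← Real.rpow_mul hw.le]
    norm_num
  have e3 : w * w ^ (-(15:ℝ)/4) = w ^ (-(3:ℝ)/4 - 1 - 1) := by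
    rw [show w * w ^ (-(15:ℝ)/4) = w ^ (1:ℝ) * w ^ (-(15:ℝ)/4) from by rw [Real.rpow_one],
      ← Real.rpow_add hw]
    norm_num
  simp only [g, hc]
  rw [mul_pow, mul_pow, e1, e2]
  rw [show w * ((1/2:ℝ)^(5:ℕ) * (21 * (21:ℝ)^((1:ℝ)/4)) * w ^ (-(15:ℝ)/4))
      = (1/2:ℝ)^(5:ℕ) * (21 * (21:ℝ)^((1:ℝ)/4)) * (w * w ^ (-(15:ℝ)/4)) by ring, e3]
  ring
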